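/- arXiv:1207.1323 — 4 statements merged into one kernel-verified Lean document; each statement's English description precedes it below -/
import Mathlib

section
/- Let A be an abelian group and H a finite group of order q acting on A by automorphisms such that every nontrivial h ∈ H fixes only the zero element of A. If (a_1, …, a_s) is an H-independent sequence of nonzero elements of A, then the set M(a_1, …, a_s) of all v ∈ A such that the extended sequence (a_1, …, a_s, v) is H-dependent has cardinality at most q^{s+1}. -/
/-- A finite sequence `(a 0, …, a (s-1))` of elements of `A` is `H`-dependent with respect
to the action `σ : H →* AddAut A` if there exist distinct indices `i 0, …, i (m-1)` (with
`m ≥ 1`) and (not necessarily distinct) nontrivial elements `h 0, …, h (m-1)` of `H` such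
that `a (i 0) + ⋯ + a (i (m-1)) = (a (i 0))^(h 0) + ⋯ + (a (i (m-1)))^(h (m-1))`.
Otherwise the sequence is `H`-independent. -/
def IsHDependent {A H : Type*} [AddCommGroup A] [Group H] (σ : H →* Multiplicative (AddAut A))
    {s : ℕ} (a : Fin s → A) : Prop :=
  ∃ (m : ℕ) (i : Fin m → Fin s) (h : Fin m → H),
    0 < m ∧ Function.Injective i ∧ (∀ j, h j ≠ 1) ∧
      ∑ j, a (i j) = ∑ j, (σ (h j)).toAdd (a (i j))

/-- **Lemma 2.1.** Let `H` be a finite group of order `q` acting on an abelian group `A`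
with `C_A(h) = 0` for all nontrivial `h ∈ H`. If `(a 0, …, a (s-1))` is an `H`-independent
sequence of nonzero elements of `A`, then the set `M` of all `v ∈ A` such that the extended
sequence `(a 0, …, a (s-1), v)` is `H`-dependent is finite of cardinality at most
`q ^ (s + 1)`. -/
theorem card_of_extension_dependent_set
    (A : Type*) [AddCommGroup A] (H : Type*) [Group H] [Finite H] (q : ℕ)
    (hq : Nat.card H = q) (σ : H →* Multiplicative (AddAut A))
    (hfree : ∀ h : H, h ≠ 1 → ∀ a : A, (σ h).toAdd a = a → a = 0)
    (s : ℕ) (a : Fin s → A) (hne : ∀ j, a j ≠ 0) (hind : ¬ IsHDependent σ a) :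
    {v : A | IsHDependent σ (Fin.snoc a v)}.Finite ∧
      {v : A | IsHDependent σ (Fin.snoc a v)}.ncard ≤ q ^ (s + 1) := by
  classical
  set M := {v : A | IsHDependent σ (Fin.snoc a v)} with hM
  have key : ∀ v ∈ M, ∃ p : (Fin s → H) × H, p.2 ≠ 1 ∧
      v - (σ p.2).toAdd v = ∑ k, ((σ (p.1 k)).toAdd (a k) - a k) := by
    intro v hv
    obtain ⟨m, i, h, hm, hinj, hne1, hsum⟩ := hv
    by_cases hlast : ∃ j, i j = Fin.last s
    · set x : Fin (s + 1) → A := Fin.snoc a v with hx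
      set g : Fin (s + 1) → H := fun t => if ht : ∃ j, i j = t then h ht.choose else 1
        with hgdef
      have hg : ∀ j, g (i j) = h j := by
        intro j
        have ht : ∃ j', i j' = i j := ⟨j, rfl⟩
        simp only [hgdef, dif_pos ht]
        rw [hinj ht.choose_spec]
      have hzero : ∑ t : Fin (s + 1), ((σ (g t)).toAdd (x t) - x t) = 0 := by
        have h1 : ∑ t : Fin (s + 1), ((σ (g t)).toAdd (x t) - x t)
            = ∑ t ∈ Finset.univ.image i, ((σ (g t)).toAdd (x t) - x t) := by
          refine (Finset.sum_subset (Finset.subset_univ _) ?_).symm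
          intro t _ ht
          have hnot : ¬ ∃ j, i j = t := by
            rintro ⟨j, rfl⟩
            exact ht (Finset.mem_image_of_mem i (Finset.mem_univ j))
          simp [hgdef, dif_neg hnot]
        rw [h1, Finset.sum_image (fun j _ j' _ hjj' => hinj hjj')]
        have : ∀ j, (σ (g (i j))).toAdd (x (i j)) - x (i j)
            = (σ (h j)).toAdd (x (i j)) - x (i j) := fun j => by rw [hg]
        rw [Finset.sum_congr rfl fun j _ => this j, Finset.sum_sub_distrib,
          ← hsum, sub_self]
      rw [Fin.sum_univ_castSucc] at hzero
      have hxc : ∀ k : Fin s, x k.castSucc = a k := fun k => by simp [hx]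
      have hxl : x (Fin.last s) = v := by simp [hx]
      refine ⟨⟨fun k => g k.castSucc, g (Fin.last s)⟩, ?_, ?_⟩
      · simp only [hgdef, dif_pos hlast]
        exact hne1 _
      · have hsplit : ∑ k : Fin s, ((σ (g k.castSucc)).toAdd (a k) - a k)
            + ((σ (g (Fin.last s))).toAdd v - v) = 0 := by
          simp only [hxc, hxl] at hzero
          exact hzero
        have := eq_neg_of_add_eq_zero_left hsplit
        rw [this, neg_sub]
    · push_neg at hlast
      refine absurd ⟨m, fun j => (i j).castPred (hlast j), h, hm, ?_, hne1, ?_⟩ hind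
      · intro j j' hjj'
        have h2 := congrArg Fin.castSucc hjj'
        simp only [Fin.castSucc_castPred] at h2
        exact hinj h2
      · have hx : ∀ j : Fin m, a ((i j).castPred (hlast j)) = (Fin.snoc a v : Fin (s+1) → A) (i j) := by
          intro j
          have h2 : (Fin.snoc a v : Fin (s+1) → A) (((i j).castPred (hlast j)).castSucc)
              = a ((i j).castPred (hlast j)) := Fin.snoc_castSucc ..
          rw [Fin.castSucc_castPred] at h2
          exact h2.symm
        simp only [hx]
        exact hsum
  choose! p hp1 hp2 using key
  have hinjOn : Set.InjOn p M := by
    intro v hv w hw hpw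
    have h1 := hp2 v hv
    have h2 := hp2 w hw
    rw [hpw] at h1
    have e : v - (σ (p w).2).toAdd v = w - (σ (p w).2).toAdd w := h1.trans h2.symm
    rw [sub_eq_sub_iff_sub_eq_sub] at e
    have hfix : (σ (p w).2).toAdd (v - w) = v - w := by
      rw [map_sub]; exact e.symm
    have := hfree (p w).2 (hp1 w hw) (v - w) hfix
    exact sub_eq_zero.mp this
  have hfin : M.Finite := Set.Finite.of_finite_image (Set.toFinite _) hinjOn
  refine ⟨hfin, ?_⟩
  have h1 : M.ncard = (p '' M).ncard := (Set.ncard_image_of_injOn hinjOn).symm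
  have h2 : (p '' M).ncard ≤ Nat.card ((Fin s → H) × H) := by
    rw [← Set.ncard_univ]
    exact Set.ncard_le_ncard (Set.subset_univ _) Set.finite_univ
  have h3 : Nat.card ((Fin s → H) × H) = q ^ (s + 1) := by
    rw [Nat.card_prod, Nat.card_fun, hq, Nat.card_eq_fintype_card, Fintype.card_fin,
      pow_succ]
  rw [h1, ← h3]
  exact h2
end

section
/- Let A be a torsion-free abelian group and H a finite group acting on A by automorphisms such that every nontrivial h ∈ H fixes only the zero element of A. Let n be a positive integer and h_1, …, h_n not necessarily distinct nontrivial elements of H. If an element a ∈ A satisfies n·a = a^{h_1} + ⋯ + a^{h_n}, then a = 0. -/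
/-- **Lemma 2.2.** Let `A` be a torsion-free abelian group and `H` a finite group acting on
`A` by automorphisms with `C_A(h) = 0` for all nontrivial `h ∈ H`. Let `n` be a positive
integer and `h 0, …, h (n-1)` not necessarily distinct nontrivial elements of `H`. If
`n • a = a^(h 0) + ⋯ + a^(h (n-1))` for an element `a ∈ A`, then `a = 0`. -/
theorem eq_zero_of_nsmul_eq_sum_images
    (A : Type*) [AddCommGroup A]
    (htf : ∀ (n : ℕ) (a : A), n ≠ 0 → n • a = 0 → a = 0)
    (H : Type*) [Group H] [Finite H] (σ : H →* Multiplicative (AddAut A))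
    (hfree : ∀ h : H, h ≠ 1 → ∀ a : A, (σ h).toAdd a = a → a = 0)
    (n : ℕ) (hn : 0 < n) (h : Fin n → H) (hh : ∀ j, h j ≠ 1)
    (a : A) (ha : n • a = ∑ j, (σ (h j)).toAdd a) : a = 0 := by
  classical
  haveI : Fintype H := Fintype.ofFinite H
  -- the subgroup generated by the orbit of `a`
  set S : AddSubgroup A := AddSubgroup.closure (Set.range fun g : H => (σ g).toAdd a) with hS
  have haS : a ∈ S := by
    apply AddSubgroup.subset_closure
    exact ⟨1, by simp [toAdd_one]⟩
  have hmem : ∀ (g : H) (x : A), x ∈ S → (σ g).toAdd x ∈ S := by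
    intro g x hx
    have : S.map (σ g).toAdd.toAddMonoidHom ≤ S := by
      rw [hS, AddMonoidHom.map_closure]
      apply AddSubgroup.closure_le _ |>.mpr
      rintro y ⟨-, ⟨g', rfl⟩, rfl⟩
      apply AddSubgroup.subset_closure
      exact ⟨g * g', by simp [map_mul, toAdd_mul, AddAut.add_apply]⟩
    exact this ⟨x, hx, rfl⟩
  -- restriction of the action to S, as linear maps
  let ρ : H → (S →ₗ[ℤ] S) := fun g =>
    { toFun := fun x => ⟨(σ g).toAdd (x : A), hmem g _ x.2⟩
      map_add' := by intro x y; ext; simp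
      map_smul' := by intro c x; ext; simp }
  have ρ_coe : ∀ (g : H) (x : S), ((ρ g x : S) : A) = (σ g).toAdd (x : A) := fun g x => rfl
  have ρ_comp : ∀ (g k : H) (x : S), ρ g (ρ k x) = ρ (g * k) x := by
    intro g k x; ext; simp [ρ_coe, map_mul, toAdd_mul, AddAut.add_apply]
  -- S is finitely generated, torsion-free, hence free of finite rank
  haveI : Module.Finite ℤ S := by
    rw [Module.Finite.iff_addGroup_fg]
    rw [AddGroup.fg_iff_addSubgroup_fg]
    exact (AddSubgroup.fg_iff _).mpr ⟨Set.range fun g : H => (σ g).toAdd a, rfl, Set.finite_range _⟩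
  haveI : NoZeroSMulDivisors ℤ S := by
    constructor
    intro c x hcx
    by_cases hc : c = 0
    · exact Or.inl hc
    · right
      have h1 : c • (x : A) = 0 := by
        have := congrArg (fun y : S => (y : A)) hcx
        simpa using this
      have h2 : (c.natAbs : ℤ) • (x : A) = 0 := by
        rcases Int.natAbs_eq c with he | he
        · rw [← he]; exact h1
        · rw [← neg_neg ((c.natAbs : ℤ)), ← he, neg_smul, h1, neg_zero]
      rw [natCast_zsmul] at h2
      have := htf c.natAbs (x : A) (by simpa using hc) h2
      exact Subtype.coe_injective (by simpa using this)
  let b := Module.Free.chooseBasis ℤ S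
  -- the invariant positive definite bilinear form
  let D : S → S → ℤ := fun x y => ∑ i, b.repr x i * b.repr y i
  let IP : S → S → ℤ := fun x y => ∑ g : H, D (ρ g x) (ρ g y)
  have IP_symm : ∀ x y, IP x y = IP y x := by
    intro x y; simp only [IP, D]
    congr 1; ext g; congr 1; ext i; ring
  have IP_add_left : ∀ x y z, IP (x + y) z = IP x z + IP y z := by
    intro x y z
    simp only [IP, D, map_add, Finsupp.add_apply, add_mul, Finset.sum_add_distrib]
  -- package additivity as an AddMonoidHom to get sums / nsmul / sub for free
  let F : S → (S →+ ℤ) := fun z => AddMonoidHom.mk' (fun x => IP x z) (fun x y => IP_add_left x y z)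
  have IP_inv : ∀ (k : H) (x y : S), IP (ρ k x) (ρ k y) = IP x y := by
    intro k x y
    simp only [IP]
    refine Fintype.sum_equiv (Equiv.mulRight k) _ _ ?_
    intro g
    simp [ρ_comp]
  have IP_self_nonneg : ∀ x, 0 ≤ IP x x := by
    intro x
    apply Finset.sum_nonneg
    intro g _
    apply Finset.sum_nonneg
    intro i _
    exact mul_self_nonneg _
  have IP_self_eq_zero : ∀ x, IP x x = 0 → x = 0 := by
    intro x hx
    have h1 : ∀ g ∈ (Finset.univ : Finset H), D (ρ g x) (ρ g x) = 0 := by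
      rw [← Finset.sum_eq_zero_iff_of_nonneg]
      · exact hx
      · intro g _; apply Finset.sum_nonneg; intro i _; exact mul_self_nonneg _
    have h2 := h1 1 (Finset.mem_univ 1)
    have hρ1 : ρ (1 : H) x = x := by ext; simp [ρ_coe, toAdd_one]
    rw [hρ1] at h2
    have h3 : ∀ i ∈ Finset.univ, b.repr x i * b.repr x i = 0 := by
      rw [← Finset.sum_eq_zero_iff_of_nonneg]
      · exact h2
      · intro i _; exact mul_self_nonneg _
    have h4 : b.repr x = 0 := by
      ext i
      exact mul_self_eq_zero.mp (h3 i (Finset.mem_univ i))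
    simpa using b.repr.injective (by simpa using h4)
  -- the element a in S
  set abar : S := ⟨a, haS⟩ with habar
  have key : (n : ℤ) • abar = ∑ j, ρ (h j) abar := by
    apply Subtype.coe_injective
    push_cast
    simpa [ρ_coe, natCast_zsmul] using ha
  -- sum of squares computation
  have sum_zero : ∑ j, IP (ρ (h j) abar - abar) (ρ (h j) abar - abar) = 0 := by
    have IP_sub_left : ∀ u v z : S, IP (u - v) z = IP u z - IP v z :=
      fun u v z => map_sub (F z) u v
    have IP_sub_right : ∀ z u v : S, IP z (u - v) = IP z u - IP z v := by
      intro z u v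
      rw [IP_symm z (u - v), IP_sub_left, IP_symm u z, IP_symm v z]
    have expand : ∀ j, IP (ρ (h j) abar - abar) (ρ (h j) abar - abar)
        = IP abar abar - IP (ρ (h j) abar) abar - IP abar (ρ (h j) abar) + IP abar abar := by
      intro j
      rw [IP_sub_left, IP_sub_right, IP_sub_right, IP_inv (h j) abar abar]
      ring
    rw [Finset.sum_congr rfl (fun j _ => expand j)]
    have s1 : ∑ j : Fin n, IP (ρ (h j) abar) abar = (n : ℤ) * IP abar abar := by
      have l1 : IP (∑ j, ρ (h j) abar) abar = ∑ j : Fin n, IP (ρ (h j) abar) abar :=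
        map_sum (F abar) _ _
      have l2 : IP ((n : ℤ) • abar) abar = (n : ℤ) • IP abar abar :=
        map_zsmul (F abar) _ _
      rw [← l1, ← key, l2, zsmul_eq_mul]; norm_cast
    have s2 : ∑ j : Fin n, IP abar (ρ (h j) abar) = (n : ℤ) * IP abar abar := by
      rw [Finset.sum_congr rfl (fun j _ => IP_symm abar (ρ (h j) abar))]
      exact s1
    simp only [Finset.sum_add_distrib, Finset.sum_sub_distrib, Finset.sum_const,
      Finset.card_univ, Fintype.card_fin, s1, s2]
    ring
  -- conclude
  have j0 : Fin n := ⟨0, hn⟩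
  have term_zero : IP (ρ (h j0) abar - abar) (ρ (h j0) abar - abar) = 0 := by
    have := (Finset.sum_eq_zero_iff_of_nonneg (fun j _ => IP_self_nonneg _)).mp sum_zero
    exact this j0 (Finset.mem_univ j0)
  have := IP_self_eq_zero _ term_zero
  have hfix : (σ (h j0)).toAdd a = a := by
    have h5 : ρ (h j0) abar = abar := sub_eq_zero.mp this
    have := congrArg (fun y : S => (y : A)) h5
    simpa [ρ_coe] using this
  exact hfree (h j0) (hh j0) a hfix
end

section
/- Let A be a torsion-free abelian group and L an A-graded Lie algebra admitting a finite group H of double automorphisms of order q such that for every nontrivial h ∈ H the automorphism of A induced by h fixes only the zero element of A, and such that C_L(H) is nilpotent of class at most c. Then for every a ∈ A and every nonzero b ∈ A one has [L_a, L_b, …, L_b] = 0 (left-normed), where L_b occurs q^{c+1} + c + 2 times. -/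
/-- Left-normed iterated Lie bracket of a list of elements:
`listBracket [x₁, x₂, …, xₙ] = [x₁, x₂, …, xₙ]` (left-normed); the empty list gives `0`.
A Lie algebra is nilpotent of class at most `c` iff `listBracket xs = 0` for every
list `xs` of length `c + 1`. -/
def listBracket {L : Type*} [LieRing L] : List L → L
  | [] => 0
  | x :: ys => ys.foldl (fun a b => ⁅a, b⁆) x

namespace CANTF

theorem sumlie {L : Type*} [LieRing L] {ι : Type*} (s : Finset ι) (f : ι → L) (y : L) :
    ⁅∑ i ∈ s, f i, y⁆ = ∑ i ∈ s, ⁅f i, y⁆ := by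
  induction s using Finset.cons_induction with
  | empty => simp
  | cons a s ha ih => rw [Finset.sum_cons, Finset.sum_cons, add_lie, ih]

theorem liesum {L : Type*} [LieRing L] {ι : Type*} (s : Finset ι) (f : ι → L) (y : L) :
    ⁅y, ∑ i ∈ s, f i⁆ = ∑ i ∈ s, ⁅y, f i⁆ := by
  induction s using Finset.cons_induction with
  | empty => simp
  | cons a s ha ih => rw [Finset.sum_cons, Finset.sum_cons, lie_add, ih]

variable {L : Type*} [LieRing L]

def itb (x : L) (f : ℕ → L) : ℕ → L
  | 0 => x
  | m+1 => ⁅itb x f m, f m⁆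

@[simp] theorem itb_zero (x : L) (f : ℕ → L) : itb x f 0 = x := rfl
@[simp] theorem itb_succ (x : L) (f : ℕ → L) (m : ℕ) : itb x f (m+1) = ⁅itb x f m, f m⁆ := rfl

theorem itb_congr {x : L} {f g : ℕ → L} {m : ℕ} (h : ∀ i < m, f i = g i) :
    itb x f m = itb x g m := by
  induction m with
  | zero => rfl
  | succ m ih =>
    rw [itb_succ, itb_succ, ih (fun i hi => h i (hi.trans (Nat.lt_succ_self m))),
      h m (Nat.lt_succ_self m)]

theorem itb_add (x : L) (f : ℕ → L) (k j : ℕ) :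
    itb x f (k + j) = itb (itb x f k) (fun i => f (k + i)) j := by
  induction j with
  | zero => rfl
  | succ j ih => rw [← Nat.add_assoc, itb_succ, itb_succ, ih]

theorem itb_eq_zero (x : L) (f : ℕ → L) {m : ℕ} (h : itb x f m = 0) (j : ℕ) :
    itb x f (m + j) = 0 := by
  induction j with
  | zero => exact h
  | succ j ih => rw [← Nat.add_assoc, itb_succ, ih, zero_lie]

theorem listBracket_cons (x : L) (l : List L) :
    listBracket (x :: l) = itb x (fun i => l.getD i 0) l.length := by
  induction l using List.reverseRecOn with
  | nil => rfl
  | append_singleton l z ih =>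
    have h1 : listBracket (x :: (l ++ [z])) = ⁅listBracket (x :: l), z⁆ := by
      simp [listBracket, List.foldl_append]
    rw [h1, ih, List.length_append, List.length_singleton, itb_succ]
    congr 1
    · exact itb_congr fun i hi => ((List.getD_append l [z] 0 i hi)).symm
    · rw [List.getD_append_right l [z] 0 l.length (le_refl _), Nat.sub_self]
      rfl

theorem itb_expand {H : Type*} [Fintype H] (G : H → L) (P : ℕ → H → L) (m : ℕ) :
    itb (∑ g : H, G g) (fun i => ∑ h : H, P i h) m
      = ∑ g : H, ∑ t : Fin m → H,
          itb (G g) (fun i => if hi : i < m then P i (t ⟨i, hi⟩) else 0) m := by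
  induction m with
  | zero =>
    simp only [itb_zero]
    refine (Finset.sum_congr rfl fun g _ => ?_).symm
    rw [Fintype.sum_unique]
  | succ m ih =>
    rw [itb_succ, ih, sumlie]
    refine Finset.sum_congr rfl fun g _ => ?_
    have key : ∀ (t : Fin m → H) (h : H),
        ⁅itb (G g) (fun i => if hi : i < m then P i (t ⟨i, hi⟩) else 0) m, P m h⁆
          = itb (G g)
              (fun i => if hi : i < m + 1 then P i ((Fin.snoc t h : Fin (m+1) → H) ⟨i, hi⟩) else 0)
              (m + 1) := by
      intro t h
      rw [itb_succ]
      congr 1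
      · refine itb_congr fun i hi => ?_
        rw [dif_pos hi, dif_pos (hi.trans (Nat.lt_succ_self m))]
        congr 1
        have : (⟨i, hi.trans (Nat.lt_succ_self m)⟩ : Fin (m+1)) = Fin.castSucc ⟨i, hi⟩ := rfl
        rw [this, Fin.snoc_castSucc]
      · rw [dif_pos (Nat.lt_succ_self m)]
        congr 1
        have : (⟨m, Nat.lt_succ_self m⟩ : Fin (m+1)) = Fin.last m := rfl
        rw [this, Fin.snoc_last]
    have ebij : Function.Bijective
        (fun p : (Fin m → H) × H => (Fin.snoc p.1 p.2 : Fin (m+1) → H)) :=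
      (⟨fun p => Fin.snoc p.1 p.2, fun t => (Fin.init t, t (Fin.last m)),
        fun p => by simp, fun t => Fin.snoc_init_self t⟩ :
        ((Fin m → H) × H) ≃ (Fin (m + 1) → H)).bijective
    calc ⁅∑ t : Fin m → H,
            itb (G g) (fun i => if hi : i < m then P i (t ⟨i, hi⟩) else 0) m, ∑ h : H, P m h⁆
        = ∑ t : Fin m → H,
            ⁅itb (G g) (fun i => if hi : i < m then P i (t ⟨i, hi⟩) else 0) m, ∑ h : H, P m h⁆ :=
          sumlie _ _ _
      _ = ∑ t : Fin m → H, ∑ h : H,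
            ⁅itb (G g) (fun i => if hi : i < m then P i (t ⟨i, hi⟩) else 0) m, P m h⁆ :=
          Finset.sum_congr rfl fun t _ => liesum _ _ _
      _ = ∑ p : (Fin m → H) × H,
            itb (G g)
              (fun i => if hi : i < m + 1 then P i ((Fin.snoc p.1 p.2 : Fin (m+1) → H) ⟨i, hi⟩) else 0)
              (m + 1) := by
          rw [Fintype.sum_prod_type]
          exact Finset.sum_congr rfl fun t _ => Finset.sum_congr rfl fun h _ => key t h
      _ = ∑ t : Fin (m + 1) → H,
            itb (G g) (fun i => if hi : i < m + 1 then P i (t ⟨i, hi⟩) else 0) (m + 1) :=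
          Fintype.sum_bijective _ ebij _ _ (fun p => rfl)

section Graded

variable {R : Type*} [CommRing R] {L : Type*} [LieRing L] [LieAlgebra R L]
  {A : Type*} [AddCommGroup A] [DecidableEq A]

theorem itb_mem (Lc : A → Submodule R L)
    (hgr : ∀ a b : A, ∀ x ∈ Lc a, ∀ y ∈ Lc b, ⁅x, y⁆ ∈ Lc (a + b))
    {a : A} {x : L} (hx : x ∈ Lc a) {f : ℕ → L} {e : ℕ → A} {m : ℕ}
    (hf : ∀ i < m, f i ∈ Lc (e i)) :
    itb x f m ∈ Lc (a + ∑ i ∈ Finset.range m, e i) := by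
  induction m with
  | zero => simpa using hx
  | succ m ih =>
    rw [itb_succ, Finset.sum_range_succ, ← add_assoc]
    exact hgr _ _ _ (ih fun i hi => hf i (hi.trans (Nat.lt_succ_self m))) _
      (hf m (Nat.lt_succ_self m))

noncomputable def pr (Lc : A → Submodule R L) (hint : DirectSum.IsInternal Lc) (D : A) :
    L →ₗ[R] L :=
  (Lc D).subtype ∘ₗ (DirectSum.component R A (fun a => Lc a) D) ∘ₗ
    (LinearEquiv.ofBijective (DirectSum.coeLinearMap Lc) hint).symm.toLinearMap

theorem pr_apply (Lc : A → Submodule R L) (hint : DirectSum.IsInternal Lc) (D d : A)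
    {x : L} (hx : x ∈ Lc d) :
    pr Lc hint D x = if d = D then x else 0 := by
  have hsymm : (LinearEquiv.ofBijective (DirectSum.coeLinearMap Lc) hint).symm x
      = DirectSum.lof R A (fun a => Lc a) d ⟨x, hx⟩ := by
    apply (LinearEquiv.ofBijective (DirectSum.coeLinearMap Lc) hint).injective
    rw [LinearEquiv.apply_symm_apply]
    symm
    show DirectSum.coeLinearMap Lc _ = x
    rw [DirectSum.lof_eq_of, DirectSum.coeLinearMap_of]
  unfold pr
  rw [LinearMap.comp_apply, LinearMap.comp_apply, LinearEquiv.coe_coe, hsymm]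
  by_cases h : d = D
  · subst h
    rw [DirectSum.component.lof_self, if_pos rfl]
    rfl
  · rw [if_neg h]
    show ((DirectSum.component R A (fun a => Lc a) D) ((DirectSum.lof R A _ d) ⟨x, hx⟩) : L) = 0
    rw [DirectSum.component.of]
    rw [dif_neg h]
    rfl

end Graded

noncomputable def dotF {M : Type*} [AddCommGroup M] {ι : Type*} [Fintype ι]
    (r : M →+ (ι →₀ ℤ)) : M →+ M →+ ℤ :=
  AddMonoidHom.mk'
    (fun u => AddMonoidHom.mk' (fun w => ∑ i : ι, r u i * r w i)
      (fun w w' => by simp [map_add, Finsupp.add_apply, mul_add, Finset.sum_add_distrib]))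
    (fun u u' => by
      ext w
      simp [map_add, Finsupp.add_apply, add_mul, Finset.sum_add_distrib])

@[simp] theorem dotF_apply {M : Type*} [AddCommGroup M] {ι : Type*} [Fintype ι]
    (r : M →+ (ι →₀ ℤ)) (u w : M) : dotF r u w = ∑ i : ι, r u i * r w i := rfl

noncomputable def avgF {M H : Type*} [AddCommGroup M] [Fintype H]
    (τ : H → (M →+ M)) (Φ : M →+ M →+ ℤ) : M →+ M →+ ℤ :=
  AddMonoidHom.mk'
    (fun u => AddMonoidHom.mk' (fun w => ∑ g : H, Φ (τ g u) (τ g w))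
      (fun w w' => by simp [map_add, Finset.sum_add_distrib]))
    (fun u u' => by ext w; simp [map_add, Finset.sum_add_distrib])

@[simp] theorem avgF_apply {M H : Type*} [AddCommGroup M] [Fintype H]
    (τ : H → (M →+ M)) (Φ : M →+ M →+ ℤ) (u w : M) :
    avgF τ Φ u w = ∑ g : H, Φ (τ g u) (τ g w) := rfl

theorem posdef_fix {M H : Type*} [AddCommGroup M] [Group H] [Fintype H]
    (τ : H → (M →+ M))
    (Φ : M →+ M →+ ℤ)
    (hsymm : ∀ u w, Φ u w = Φ w u) (hpos : ∀ u, 0 ≤ Φ u u)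
    (hdef : ∀ u, Φ u u = 0 → u = 0)
    (hinv : ∀ g u w, Φ (τ g u) (τ g w) = Φ u w)
    (β : M) {c' : ℕ} (t : Fin c' → H)
    (hsum : (∑ i, τ (t i) β) = c' • β) : ∀ i, τ (t i) β = β := by
  have hexp : ∀ g : H, Φ (τ g β - β) (τ g β - β)
      = 2 * Φ β β - 2 * Φ (τ g β) β := by
    intro g
    have h1 : Φ (τ g β) (τ g β) = Φ β β := hinv g β β
    have h2 : Φ β (τ g β) = Φ (τ g β) β := hsymm _ _
    simp only [map_sub, AddMonoidHom.sub_apply, h1, h2]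
    ring
  have hle : ∀ g : H, Φ (τ g β) β ≤ Φ β β := by
    intro g
    have h0 := hpos (τ g β - β)
    rw [hexp g] at h0
    linarith
  have hΨ : ∑ i : Fin c', Φ (τ (t i) β) β = ∑ i : Fin c', Φ β β := by
    have h1 : (Φ.flip β) (∑ i : Fin c', τ (t i) β) = (Φ.flip β) (c' • β) := by rw [hsum]
    rw [map_sum, map_nsmul] at h1
    simp only [AddMonoidHom.flip_apply] at h1
    rw [h1, Finset.sum_const, Finset.card_univ, Fintype.card_fin]
  have heach : ∀ i : Fin c', Φ (τ (t i) β) β = Φ β β := by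
    have := (Finset.sum_eq_sum_iff_of_le (fun i _ => hle (t i))).mp hΨ
    exact fun i => this i (Finset.mem_univ i)
  intro i
  have h0 : Φ (τ (t i) β - β) (τ (t i) β - β) = 0 := by
    rw [hexp (t i), heach i]; ring
  have := hdef _ h0
  rwa [sub_eq_zero] at this

theorem lemF {A : Type*} [AddCommGroup A]
    (htf : ∀ (n : ℕ) (a : A), n ≠ 0 → n • a = 0 → a = 0)
    {H : Type*} [Group H] [Fintype H] (σ : H →* Multiplicative (AddAut A))
    (hfree : ∀ h : H, h ≠ 1 → ∀ a : A, Multiplicative.toAdd (σ h) a = a → a = 0)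
    {b : A} (hb : b ≠ 0) {c' : ℕ} (t : Fin c' → H)
    (hsum : ∑ i : Fin c', Multiplicative.toAdd (σ (t i)) b = c' • b) : ∀ i, t i = 1 := by
  haveI : NoZeroSMulDivisors ℤ A := by
    constructor
    intro z a h
    by_cases hz : z = 0
    · exact Or.inl hz
    · refine Or.inr (htf z.natAbs a (Int.natAbs_ne_zero.mpr hz) ?_)
      have hzn : ((z.natAbs : ℤ)) • a = 0 := by
        rcases Int.natAbs_eq z with h' | h'
        · rw [← h', h]
        · have h'' : ((z.natAbs : ℤ)) = -z := by omega
          rw [h'', neg_zsmul, h, neg_zero]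
      rwa [natCast_zsmul] at hzn
  set B : Submodule ℤ A := Submodule.span ℤ (Set.range (fun g : H => Multiplicative.toAdd (σ g) b)) with hB
  have hσB : ∀ g : H, ∀ x ∈ B, Multiplicative.toAdd (σ g) x ∈ B := by
    intro g x hx
    induction hx using Submodule.span_induction with
    | mem y hy =>
      obtain ⟨h, rfl⟩ := hy
      have : Multiplicative.toAdd (σ g) (Multiplicative.toAdd (σ h) b) = Multiplicative.toAdd (σ (g * h)) b := by rw [map_mul]; rfl
      rw [this]
      exact Submodule.subset_span ⟨g * h, rfl⟩
    | zero => rw [map_zero]; exact B.zero_mem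
    | add y z _ _ hy hz => rw [map_add]; exact B.add_mem hy hz
    | smul z y _ hy =>
      have : Multiplicative.toAdd (σ g) (z • y) = z • Multiplicative.toAdd (σ g) y := map_zsmul (Multiplicative.toAdd (σ g)) z y
      rw [this]
      exact B.smul_mem z hy
  haveI : Module.Finite ℤ B := Module.Finite.iff_fg.mpr (Submodule.fg_span (Set.finite_range _))
  haveI : Module.Free ℤ B := Module.free_of_finite_type_torsion_free'
  set ι := Module.Free.ChooseBasisIndex ℤ B with hι
  haveI : Fintype ι := Module.Free.ChooseBasisIndex.fintype ℤ B
  set bas := Module.Free.chooseBasis ℤ B with hbas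
  -- τ : H → B →+ B
  set τ : H → (B →+ B) := fun g => AddMonoidHom.mk'
    (fun u => ⟨Multiplicative.toAdd (σ g) u, hσB g u u.2⟩)
    (fun u v => Subtype.ext (map_add (Multiplicative.toAdd (σ g)) u.1 v.1)) with hτ
  have τ_apply : ∀ (g : H) (u : B), ((τ g u : B) : A) = Multiplicative.toAdd (σ g) u := fun g u => rfl
  have τ_mul : ∀ (g g' : H) (u : B), τ g (τ g' u) = τ (g * g') u := by
    intro g g' u
    ext
    rw [τ_apply, τ_apply, τ_apply, map_mul]
    rfl
  have τ_one : ∀ u : B, τ 1 u = u := by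
    intro u; ext; rw [τ_apply, map_one]; rfl
  set r : B →+ (ι →₀ ℤ) := bas.repr.toLinearMap.toAddMonoidHom with hr
  set Φ₀ : B →+ B →+ ℤ := dotF r with hΦ₀
  set Φ : B →+ B →+ ℤ := avgF τ Φ₀ with hΦ
  have Φ₀symm : ∀ u w : B, Φ₀ u w = Φ₀ w u := by
    intro u w; rw [hΦ₀]; simp only [dotF_apply]
    exact Finset.sum_congr rfl fun i _ => mul_comm _ _
  have Φ₀pos : ∀ u : B, 0 ≤ Φ₀ u u := by
    intro u; rw [hΦ₀]; simp only [dotF_apply]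
    exact Finset.sum_nonneg fun i _ => mul_self_nonneg _
  have Φ₀def : ∀ u : B, Φ₀ u u = 0 → u = 0 := by
    intro u hu
    rw [hΦ₀] at hu; simp only [dotF_apply] at hu
    have hz : ∀ i ∈ Finset.univ (α := ι), r u i * r u i = 0 :=
      (Finset.sum_eq_zero_iff_of_nonneg (fun i _ => mul_self_nonneg _)).mp hu
    have hru : r u = 0 := by
      ext i
      have := hz i (Finset.mem_univ i)
      exact mul_self_eq_zero.mp this
    have : bas.repr u = 0 := hru
    simpa using congrArg bas.repr.symm this
  have Φsymm : ∀ u w : B, Φ u w = Φ w u := by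
    intro u w; rw [hΦ]; simp only [avgF_apply]
    exact Finset.sum_congr rfl fun g _ => Φ₀symm _ _
  have Φpos : ∀ u : B, 0 ≤ Φ u u := by
    intro u; rw [hΦ]; simp only [avgF_apply]
    exact Finset.sum_nonneg fun g _ => Φ₀pos _
  have Φdef : ∀ u : B, Φ u u = 0 → u = 0 := by
    intro u hu
    rw [hΦ] at hu; simp only [avgF_apply] at hu
    have hz : ∀ g ∈ Finset.univ (α := H), Φ₀ (τ g u) (τ g u) = 0 :=
      (Finset.sum_eq_zero_iff_of_nonneg (fun g _ => Φ₀pos _)).mp hu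
    have := hz 1 (Finset.mem_univ 1)
    rw [τ_one] at this
    exact Φ₀def u this
  have Φinv : ∀ (g : H) (u w : B), Φ (τ g u) (τ g w) = Φ u w := by
    intro g u w
    rw [hΦ]; simp only [avgF_apply]
    have : ∀ g' : H, Φ₀ (τ g' (τ g u)) (τ g' (τ g w)) = Φ₀ (τ (g' * g) u) (τ (g' * g) w) := by
      intro g'; rw [τ_mul, τ_mul]
    rw [Finset.sum_congr rfl fun g' _ => this g']
    exact Equiv.sum_comp (Equiv.mulRight g) (fun g' => Φ₀ (τ g' u) (τ g' w))
  have hbB : b ∈ B := Submodule.subset_span ⟨1, by simp⟩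
  set βB : B := ⟨b, hbB⟩ with hβB
  have hsumB : (∑ i : Fin c', τ (t i) βB) = c' • βB := by
    ext
    push_cast [Submodule.coe_sum]
    rw [← hsum]
    rfl
  have hfix := posdef_fix τ Φ Φsymm Φpos Φdef Φinv βB t hsumB
  intro i
  by_contra hne
  have : Multiplicative.toAdd (σ (t i)) b = b := by
    have := congrArg (Subtype.val) (hfix i)
    exact this
  exact hb (hfree (t i) hne b this)

end CANTF

/-- **(Proved inside Theorem 1.3.)** Let `A` be a torsion-free abelian group and `L` an
`A`-graded Lie algebra admitting a finite group `H` of double automorphisms of order `q`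
with `C_A(h) = 0` for all nontrivial `h ∈ H` and `C_L(H)` nilpotent of class at most `c`.
Then for every `a ∈ A` and every nonzero `b ∈ A`, `[L_a, L_b, …, L_b] = 0` (left-normed)
with `L_b` occurring `q ^ (c + 1) + c + 2` times. -/
theorem component_ad_nilpotent_torsion_free
    (R : Type*) [CommRing R] (L : Type*) [LieRing L] [LieAlgebra R L]
    (A : Type*) [AddCommGroup A] [DecidableEq A]
    (htf : ∀ (n : ℕ) (a : A), n ≠ 0 → n • a = 0 → a = 0)
    (Lc : A → Submodule R L)
    (hint : DirectSum.IsInternal Lc)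
    (hgr : ∀ a b : A, ∀ x ∈ Lc a, ∀ y ∈ Lc b, ⁅x, y⁆ ∈ Lc (a + b))
    (H : Type*) [Group H] [Finite H] (q : ℕ) (hq : Nat.card H = q)
    (ρ : H →* (L ≃ₗ[R] L)) (σ : H →* Multiplicative (AddAut A))
    (hbr : ∀ (h : H) (x y : L), ρ h ⁅x, y⁆ = ⁅ρ h x, ρ h y⁆)
    (hcomp : ∀ (h : H) (a : A), ⇑(ρ h) '' (Lc a : Set L) = (Lc (Multiplicative.toAdd (σ h) a) : Set L))
    (hfree : ∀ h : H, h ≠ 1 → ∀ a : A, Multiplicative.toAdd (σ h) a = a → a = 0)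
    (c : ℕ)
    (hCL : ∀ xs : List L, xs.length = c + 1 → (∀ y ∈ xs, ∀ h : H, ρ h y = y) →
      listBracket xs = 0) :
    ∀ (a b : A), b ≠ 0 → ∀ x ∈ Lc a,
      ∀ xs : List L, xs.length = q ^ (c + 1) + c + 2 → (∀ y ∈ xs, y ∈ Lc b) →
        listBracket (x :: xs) = 0 := by
  classical
  intro a b hb x hx xs hlen hmem
  haveI : Fintype H := Fintype.ofFinite H
  have hcard : Fintype.card H = q := by rw [← Nat.card_eq_fintype_card, hq]
  set n : ℕ := q ^ (c + 1) + c + 2 with hn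
  set Q : ℕ := q ^ (c + 1) with hQ
  set y : ℕ → L := fun i => xs.getD i 0 with hy
  have hymem : ∀ i < n, y i ∈ Lc b := by
    intro i hi
    have hi' : i < xs.length := by rw [hlen]; exact hi
    rw [hy]
    simp only
    rw [xs.getD_eq_getElem 0 hi']
    exact hmem _ (List.getElem_mem hi')
  have hρmem : ∀ (h : H) (d : A) (z : L), z ∈ Lc d → ρ h z ∈ Lc (Multiplicative.toAdd (σ h) d) := by
    intro h d z hz
    have himg : ρ h z ∈ (Lc (Multiplicative.toAdd (σ h) d) : Set L) := by
      rw [← hcomp h d]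
      exact ⟨z, hz, rfl⟩
    exact himg
  have hρ1 : ∀ z : L, ρ 1 z = z := fun z => by rw [map_one]; rfl
  have hσ1 : ∀ d : A, Multiplicative.toAdd (σ 1) d = d := fun d => by rw [map_one]; rfl
  have hvmem : ∀ k, k ≤ n → CANTF.itb x y k ∈ Lc (a + k • b) := by
    intro k hk
    have := CANTF.itb_mem Lc hgr hx (f := y) (e := fun _ => b) (m := k)
      (fun i hi => hymem i (lt_of_lt_of_le hi hk))
    simpa [Finset.sum_const, Finset.card_range] using this
  have hTfix : ∀ (u : L) (h : H), ρ h (∑ g : H, ρ g u) = ∑ g : H, ρ g u := by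
    intro u h
    rw [map_sum]
    have hcomp' : ∀ g : H, ρ h (ρ g u) = ρ (h * g) u := fun g => by rw [map_mul]; rfl
    rw [Finset.sum_congr rfl fun g _ => hcomp' g]
    exact Equiv.sum_comp (Equiv.mulLeft h) (fun g => ρ g u)
  -- degree of a (g,t)-term based at level k
  set Dg : ℕ → H × (Fin c → H) → A :=
    fun k p => Multiplicative.toAdd (σ p.1) (a + k • b) + ∑ i : Fin c, Multiplicative.toAdd (σ (p.2 i)) b with hDg
  -- a tuple with nontrivial first entry is active for at most one k
  have huniq : ∀ (p : H × (Fin c → H)), p.1 ≠ 1 → ∀ k k' : ℕ,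
      Dg k p = a + (k + c) • b → Dg k' p = a + (k' + c) • b → k = k' := by
    have key : ∀ (p : H × (Fin c → H)), p.1 ≠ 1 → ∀ k k' : ℕ, k' ≤ k →
        Dg k p = a + (k + c) • b → Dg k' p = a + (k' + c) • b → k = k' := by
      intro p hp k k' hle h1 h2
      simp only [hDg] at h1 h2
      have e1 : Multiplicative.toAdd (σ p.1) ((a + k • b) - (a + k' • b))
          = (a + (k + c) • b) - (a + (k' + c) • b) := by
        rw [map_sub, eq_sub_of_add_eq h1, eq_sub_of_add_eq h2]
        abel
      have e2 : (a + k • b) - (a + k' • b) = (k - k') • b := by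
        rw [sub_nsmul b hle]; abel
      have e3 : (a + (k + c) • b) - (a + (k' + c) • b) = (k - k') • b := by
        have h4 : (k + c) - (k' + c) = k - k' := by omega
        rw [← h4, sub_nsmul b (by omega : k' + c ≤ k + c)]; abel
      rw [e2, e3] at e1
      have := hfree p.1 hp _ e1
      by_cases hkk : k - k' = 0
      · omega
      · exact absurd (htf _ _ hkk this) hb
    intro p hp k k' h1 h2
    rcases le_total k' k with hle | hle
    · exact key p hp k k' hle h1 h2
    · exact (key p hp k' k hle h2 h1).symm
  -- existence of a clean level k
  have hclean : ∃ k, k ≤ Q ∧ ∀ p : H × (Fin c → H), p.1 ≠ 1 → Dg k p ≠ a + (k + c) • b := by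
    by_contra hcon
    push_neg at hcon
    have hcon' : ∀ k ∈ Finset.range (Q + 1), ∃ p : H × (Fin c → H),
        p.1 ≠ 1 ∧ Dg k p = a + (k + c) • b := by
      intro k hk
      exact hcon k (by simpa using Nat.lt_succ_iff.mp (Finset.mem_range.mp hk))
    set f : ℕ → H × (Fin c → H) := fun k =>
      if hk : k ∈ Finset.range (Q + 1) then Classical.choose (hcon' k hk)
      else (1, fun _ => 1) with hf
    have hfprop : ∀ k ∈ Finset.range (Q + 1),
        (f k).1 ≠ 1 ∧ Dg k (f k) = a + (k + c) • b := by
      intro k hk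
      rw [hf]; simp only [dif_pos hk]
      exact Classical.choose_spec (hcon' k hk)
    have hinj : Set.InjOn f (Finset.range (Q + 1)) := by
      intro k hk k' hk' hfe
      have p1 := hfprop k (by simpa using hk)
      have p2 := hfprop k' (by simpa using hk')
      exact huniq (f k) p1.1 k k' p1.2 (hfe ▸ p2.2)
    have hcardle : (Finset.range (Q + 1)).card ≤ (Finset.univ : Finset (H × (Fin c → H))).card :=
      Finset.card_le_card_of_injOn f (fun k _ => Finset.mem_univ _) hinj
    rw [Finset.card_range, Finset.card_univ, Fintype.card_prod, Fintype.card_fun,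
      Fintype.card_fin, hcard] at hcardle
    have : Q + 1 ≤ Q := by
      calc Q + 1 ≤ q * q ^ c := hcardle
        _ = Q := by rw [hQ, pow_succ, mul_comm]
    omega
  obtain ⟨k, hkQ, hkclean⟩ := hclean
  have hkcn : k + c ≤ n := by omega
  -- the fixed subalgebra identity
  set v : L := CANTF.itb x y k with hv
  have hvLc : v ∈ Lc (a + k • b) := hvmem k (by omega)
  set lst : List L := (∑ g : H, ρ g v) :: List.ofFn (fun i : Fin c => ∑ g : H, ρ g (y (k + i))) with hlst
  have hzero : listBracket lst = 0 := by
    refine hCL lst (by rw [hlst]; simp) ?_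
    intro z hz h
    rw [hlst] at hz
    rcases List.mem_cons.mp hz with hz1 | hz2
    · rw [hz1]; exact hTfix v h
    · obtain ⟨i, hi⟩ := List.mem_ofFn.mp hz2
      rw [← hi]; exact hTfix _ h
  have hitb0 : CANTF.itb (∑ g : H, ρ g v) (fun i => ∑ g : H, ρ g (y (k + i))) c = 0 := by
    rw [CANTF.listBracket_cons] at hzero
    rw [← hzero]
    have hlc : (List.ofFn (fun i : Fin c => ∑ g : H, ρ g (y (k + i)))).length = c := by simp
    rw [hlc]
    refine CANTF.itb_congr fun i hi => ?_
    rw [List.getD_eq_getElem _ 0 (by simpa using hi), List.getElem_ofFn]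
  -- expansion into tuple terms
  have hsum0 : (∑ g : H, ∑ t : Fin c → H,
      CANTF.itb (ρ g v) (fun i => if hi : i < c then ρ (t ⟨i, hi⟩) (y (k + i)) else 0) c) = 0 := by
    rw [← CANTF.itb_expand (fun g => ρ g v) (fun i h => ρ h (y (k + i))) c]
    exact hitb0
  have hWmem : ∀ (g : H) (t : Fin c → H),
      CANTF.itb (ρ g v) (fun i => if hi : i < c then ρ (t ⟨i, hi⟩) (y (k + i)) else 0) c
        ∈ Lc (Dg k (g, t)) := by
    intro g t
    have hx0 : ρ g v ∈ Lc (Multiplicative.toAdd (σ g) (a + k • b)) := hρmem g _ v hvLc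
    have hmem' : ∀ i < c, (if hi : i < c then ρ (t ⟨i, hi⟩) (y (k + i)) else 0)
        ∈ Lc ((fun i => if hi : i < c then Multiplicative.toAdd (σ (t ⟨i, hi⟩)) b else 0) i) := by
      intro i hi
      simp only [dif_pos hi]
      exact hρmem _ _ _ (hymem (k + i) (by omega))
    have hmm := CANTF.itb_mem Lc hgr hx0 hmem'
    have hdeg : (∑ i ∈ Finset.range c, (fun i => if hi : i < c then Multiplicative.toAdd (σ (t ⟨i, hi⟩)) b else 0) i)
        = ∑ i : Fin c, Multiplicative.toAdd (σ (t i)) b := by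
      rw [Finset.sum_range (fun i => if hi : i < c then Multiplicative.toAdd (σ (t ⟨i, hi⟩)) b else 0)]
      exact Finset.sum_congr rfl fun i _ => by simp
    rw [hdeg] at hmm
    simpa only [hDg] using hmm
  have hback : Dg k ((1 : H), (fun _ => (1 : H) : Fin c → H)) = a + (k + c) • b := by
    simp only [hDg, hσ1]
    rw [Finset.sum_const, Finset.card_univ, Fintype.card_fin, add_nsmul]
    abel
  have hforward : ∀ p : H × (Fin c → H), Dg k p = a + (k + c) • b →
      p = ((1 : H), (fun _ => (1 : H) : Fin c → H)) := by
    intro p hp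
    by_cases h1 : p.1 = 1
    · have hS : (∑ i : Fin c, Multiplicative.toAdd (σ (p.2 i)) b) = c • b := by
        simp only [hDg, h1, hσ1] at hp
        have hp2 : a + k • b + (∑ i : Fin c, Multiplicative.toAdd (σ (p.2 i)) b) = a + k • b + c • b := by
          rw [hp, add_nsmul]
          abel
        exact add_left_cancel hp2
      have htriv := CANTF.lemF htf σ hfree hb p.2 hS
      obtain ⟨p1, p2⟩ := p
      simp only at h1 htriv
      rw [h1]
      exact Prod.ext rfl (funext htriv)
    · exact absurd hp (hkclean p h1)
  -- project onto the target degree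
  have hproj := congrArg (CANTF.pr Lc hint (a + (k + c) • b)) hsum0
  rw [map_zero] at hproj
  simp only [map_sum] at hproj
  have hterm : ∀ (g : H) (t : Fin c → H),
      CANTF.pr Lc hint (a + (k + c) • b)
        (CANTF.itb (ρ g v) (fun i => if hi : i < c then ρ (t ⟨i, hi⟩) (y (k + i)) else 0) c)
      = if ((g, t) : H × (Fin c → H)) = ((1 : H), (fun _ => (1 : H) : Fin c → H)) then
          CANTF.itb (ρ g v) (fun i => if hi : i < c then ρ (t ⟨i, hi⟩) (y (k + i)) else 0) c
        else 0 := by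
    intro g t
    rw [CANTF.pr_apply Lc hint _ (Dg k (g, t)) (hWmem g t)]
    by_cases hpt : ((g, t) : H × (Fin c → H)) = ((1 : H), (fun _ => (1 : H) : Fin c → H))
    · have hDfin : Dg k (g, t) = a + (k + c) • b := by rw [hpt]; exact hback
      rw [if_pos hDfin, if_pos hpt]
    · have hne : Dg k (g, t) ≠ a + (k + c) • b := fun hc => hpt (hforward _ hc)
      rw [if_neg hne, if_neg hpt]
  simp only [hterm] at hproj
  have hcollapse : (∑ g : H, ∑ t : Fin c → H,
      if ((g, t) : H × (Fin c → H)) = ((1 : H), (fun _ => (1 : H) : Fin c → H)) then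
        CANTF.itb (ρ g v) (fun i => if hi : i < c then ρ (t ⟨i, hi⟩) (y (k + i)) else 0) c
      else 0)
      = CANTF.itb (ρ (1 : H) v)
          (fun i => if hi : i < c then ρ ((fun _ => (1 : H) : Fin c → H) ⟨i, hi⟩) (y (k + i)) else 0) c := by
    rw [Finset.sum_eq_single (1 : H)]
    · rw [Finset.sum_eq_single ((fun _ => (1 : H)) : Fin c → H)]
      · rw [if_pos rfl]
      · intro t _ ht
        rw [if_neg]
        intro hc
        exact ht (congrArg Prod.snd hc)
      · intro h1
        exact absurd (Finset.mem_univ _) h1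
    · intro g _ hg
      apply Finset.sum_eq_zero
      intro t _
      rw [if_neg]
      intro hc
      exact hg (congrArg Prod.fst hc)
    · intro h1
      exact absurd (Finset.mem_univ _) h1
  rw [hcollapse] at hproj
  have hW1 : CANTF.itb (ρ (1 : H) v)
      (fun i => if hi : i < c then ρ ((fun _ => (1 : H) : Fin c → H) ⟨i, hi⟩) (y (k + i)) else 0) c
      = CANTF.itb v (fun i => y (k + i)) c := by
    rw [hρ1 v]
    refine CANTF.itb_congr fun i hi => ?_
    rw [dif_pos hi]
    exact hρ1 _
  rw [hW1] at hproj
  have hvc : CANTF.itb x y (k + c) = 0 := by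
    rw [CANTF.itb_add, ← hproj]
  have hnz : CANTF.itb x y n = 0 := by
    have he : n = (k + c) + (n - (k + c)) := by omega
    rw [he]
    exact CANTF.itb_eq_zero x y hvc _
  rw [CANTF.listBracket_cons, hlen, ← hy]
  exact hnz
end

section
/- For all positive integers c and q there exists a constant p_0 = p_0(c,q), depending only on c and q, with the following property: if p > p_0 is a prime, A is an elementary abelian group of order p², H is a group of order q acting on A by automorphisms such that every nontrivial h ∈ H fixes only the zero element of A, and b is a nonzero element of A, then the constant sequence (b, b, …, b) of length c is H-independent. -/
set_option linter.unusedSectionVars false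

open Finset

namespace CorAux

variable {H : Type*} [Group H] [Fintype H] [DecidableEq H]

noncomputable instance coeffCoeFun : CoeFun (MonoidAlgebra ℤ H) (fun _ => H → ℤ) := ⟨fun x => x.coeff⟩

theorem decomp (x : MonoidAlgebra ℤ H) :
    x = ∑ s : H, MonoidAlgebra.single s (x s) := by
  ext g
  rw [MonoidAlgebra.coeff_sum, Finset.sum_apply']
  simp [MonoidAlgebra.single_apply, Finsupp.single_apply, eq_comm]

theorem mulApply (x y : MonoidAlgebra ℤ H) (g : H) :
    (x * y) g = ∑ s : H, x s * y (s⁻¹ * g) := by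
  conv_lhs => rw [decomp x, Finset.sum_mul]
  rw [MonoidAlgebra.coeff_sum, Finset.sum_apply']
  exact Finset.sum_congr rfl fun s _ => by rw [MonoidAlgebra.single_mul_apply]

/-- The standard inner product on the group algebra. -/
def ip (x y : MonoidAlgebra ℤ H) : ℤ := ∑ g : H, x g * y g

theorem ip_comm (x y : MonoidAlgebra ℤ H) : ip x y = ip y x := by
  unfold ip; exact Finset.sum_congr rfl fun g _ => mul_comm _ _

theorem ip_self_nonneg (x : MonoidAlgebra ℤ H) : 0 ≤ ip x x :=
  Finset.sum_nonneg fun g _ => mul_self_nonneg _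

theorem eq_zero_of_ip_self {x : MonoidAlgebra ℤ H} (h : ip x x = 0) : x = 0 := by
  have := (Finset.sum_eq_zero_iff_of_nonneg (fun g _ => mul_self_nonneg (x g))).1 h
  ext g
  exact mul_self_eq_zero.1 (this g (mem_univ g))

theorem ip_add_left (x y z : MonoidAlgebra ℤ H) : ip (x + y) z = ip x z + ip y z := by
  unfold ip
  rw [← Finset.sum_add_distrib]
  exact Finset.sum_congr rfl fun g _ => by rw [MonoidAlgebra.coeff_add, Finsupp.add_apply, add_mul]

theorem ip_sub_left (x y z : MonoidAlgebra ℤ H) : ip (x - y) z = ip x z - ip y z := by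
  unfold ip
  rw [← Finset.sum_sub_distrib]
  exact Finset.sum_congr rfl fun g _ => by rw [MonoidAlgebra.coeff_sub, Finsupp.sub_apply, sub_mul]

theorem ip_sum_left {ι : Type*} (s : Finset ι) (f : ι → MonoidAlgebra ℤ H)
    (z : MonoidAlgebra ℤ H) : ip (∑ i ∈ s, f i) z = ∑ i ∈ s, ip (f i) z := by
  unfold ip
  rw [Finset.sum_comm]
  refine Finset.sum_congr rfl fun g _ => ?_
  rw [MonoidAlgebra.coeff_sum, Finset.sum_apply', Finset.sum_mul]

theorem ip_smul_left (n : ℤ) (x z : MonoidAlgebra ℤ H) : ip (n • x) z = n * ip x z := by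
  unfold ip
  rw [Finset.mul_sum]
  exact Finset.sum_congr rfl fun g _ => by rw [MonoidAlgebra.coeff_smul_apply, smul_eq_mul, mul_assoc]

/-- adjunction for the inner product: multiplying on the right by `y` is adjoint to
multiplying on the right by the "star" `y'` of `y`. -/
theorem ip_mul_right (x y y' z : MonoidAlgebra ℤ H) (hy : ∀ g : H, y' g = y g⁻¹) :
    ip (x * y) z = ip x (z * y') := by
  unfold ip
  simp only [mulApply]
  calc ∑ g : H, (∑ s : H, x s * y (s⁻¹ * g)) * z g
      = ∑ g : H, ∑ s : H, x s * y (s⁻¹ * g) * z g := by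
        exact Finset.sum_congr rfl fun g _ => by rw [Finset.sum_mul]
    _ = ∑ s : H, ∑ g : H, x s * y (s⁻¹ * g) * z g := Finset.sum_comm
    _ = ∑ s : H, x s * ∑ t : H, z t * y' (t⁻¹ * s) := by
        refine Finset.sum_congr rfl fun s _ => ?_
        rw [Finset.mul_sum]
        refine Finset.sum_congr rfl fun t _ => ?_
        rw [hy, mul_inv_rev, inv_inv]
        ring

theorem ip_sub_right (x y z : MonoidAlgebra ℤ H) : ip z (x - y) = ip z x - ip z y := by
  rw [ip_comm, ip_sub_left, ip_comm x z, ip_comm y z]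

theorem ip_mul_single_self (x : MonoidAlgebra ℤ H) (k : H) :
    ip (x * MonoidAlgebra.single k 1) (x * MonoidAlgebra.single k 1) = ip x x := by
  unfold ip
  refine Fintype.sum_equiv (Equiv.mulRight k⁻¹) _ _ fun g => ?_
  simp [MonoidAlgebra.mul_single_apply]

theorem ip_mul_single_le (x : MonoidAlgebra ℤ H) (k : H) :
    ip (x * MonoidAlgebra.single k 1) x ≤ ip x x := by
  set a := x * MonoidAlgebra.single k 1 with ha
  have h0 : 0 ≤ ip (a - x) (a - x) := ip_self_nonneg _
  rw [ip_sub_left, ip_sub_right, ip_sub_right, ip_mul_single_self, ip_comm x a] at h0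
  omega

theorem eq_of_ip_mul_single (x : MonoidAlgebra ℤ H) (k : H)
    (h : ip (x * MonoidAlgebra.single k 1) x = ip x x) :
    x * MonoidAlgebra.single k 1 = x := by
  set a := x * MonoidAlgebra.single k 1 with ha
  have h0 : ip (a - x) (a - x) = 0 := by
    rw [ip_sub_left, ip_sub_right, ip_sub_right, ip_mul_single_self, ip_comm x a]
    omega
  have := eq_zero_of_ip_self h0
  rw [sub_eq_zero] at this
  exact this

section Setting

open MonoidAlgebra

variable {mm : ℕ} (hs : Fin mm → H)

/-- the element `∑ (hs j)⁻¹` of the group algebra -/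
noncomputable def u2 (hs : Fin mm → H) : MonoidAlgebra ℤ H := ∑ j, MonoidAlgebra.single (hs j)⁻¹ 1

/-- `u2 - mm` -/
noncomputable def v2 (hs : Fin mm → H) : MonoidAlgebra ℤ H := u2 hs - MonoidAlgebra.single 1 (mm : ℤ)

/-- the element `∑ hs j` of the group algebra -/
noncomputable def uu (hs : Fin mm → H) : MonoidAlgebra ℤ H := ∑ j, MonoidAlgebra.single (hs j) 1

/-- `uu - mm` -/
noncomputable def vv (hs : Fin mm → H) : MonoidAlgebra ℤ H := uu hs - MonoidAlgebra.single 1 (mm : ℤ)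

/-- sum over the cyclic subgroup generated by `g` -/
noncomputable def nn (g : H) : MonoidAlgebra ℤ H := ∑ z : Subgroup.zpowers g, MonoidAlgebra.single (z : H) (1 : ℤ)

/-- the positive-definite element built from the relation data -/
noncomputable def ww (hs : Fin mm → H) : MonoidAlgebra ℤ H :=
  v2 hs * vv hs + ∑ g ∈ Finset.univ.erase (1 : H), nn g * nn g

theorem nn_coord (g t : H) : nn g t = if t ∈ Subgroup.zpowers g then 1 else 0 := by
  rw [nn, MonoidAlgebra.coeff_sum, Finset.sum_apply']
  by_cases ht : t ∈ Subgroup.zpowers g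
  · rw [if_pos ht]
    rw [Finset.sum_eq_single (⟨t, ht⟩ : Subgroup.zpowers g)]
    · simp [MonoidAlgebra.single_apply]
    · intro z _ hz
      rw [MonoidAlgebra.single_apply, if_neg]
      intro h
      exact hz (Subtype.ext h)
    · intro h; exact absurd (Finset.mem_univ _) h
  · rw [if_neg ht]
    refine Finset.sum_eq_zero fun z _ => ?_
    rw [MonoidAlgebra.single_apply, if_neg]
    intro h
    exact ht (h ▸ z.2)

theorem nn_symm (g t : H) : nn g t = nn g t⁻¹ := by
  rw [nn_coord, nn_coord]
  congr 1
  simp [Subgroup.inv_mem_iff]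

theorem uu_coord (t : H) : uu hs t = ∑ j, if hs j = t then 1 else 0 := by
  rw [uu, MonoidAlgebra.coeff_sum, Finset.sum_apply']
  exact Finset.sum_congr rfl fun j _ => by rw [MonoidAlgebra.single_apply]

theorem u2_coord (t : H) : u2 hs t = ∑ j, if (hs j)⁻¹ = t then 1 else 0 := by
  rw [u2, MonoidAlgebra.coeff_sum, Finset.sum_apply']
  exact Finset.sum_congr rfl fun j _ => by rw [MonoidAlgebra.single_apply]

theorem v2_coord_eq (t : H) : v2 hs t = vv hs t⁻¹ := by
  rw [v2, vv, MonoidAlgebra.coeff_sub, MonoidAlgebra.coeff_sub, Finsupp.sub_apply, Finsupp.sub_apply, uu_coord, u2_coord]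
  congr 1
  · exact Finset.sum_congr rfl fun j _ => by simp [inv_eq_iff_eq_inv]
  · simp [MonoidAlgebra.single_apply, Finsupp.single_apply, eq_comm, inv_eq_one]

theorem mul_single_one (x : MonoidAlgebra ℤ H) (n : ℤ) :
    x * MonoidAlgebra.single 1 n = n • x := by
  ext g
  rw [MonoidAlgebra.mul_single_apply, MonoidAlgebra.coeff_smul_apply]
  simp [mul_comm]

theorem ww_inj (hm0 : 0 < mm) (hne : ∀ j, hs j ≠ 1) (x : MonoidAlgebra ℤ H)
    (hx : x * ww hs = 0) : x = 0 := by
  have h0 : ip (x * ww hs) x = 0 := by rw [hx]; unfold ip; simp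
  have hsplit : x * ww hs = (x * v2 hs) * vv hs +
      ∑ g ∈ Finset.univ.erase (1 : H), (x * nn g) * nn g := by
    rw [ww, mul_add, Finset.mul_sum]
    simp [mul_assoc]
  rw [hsplit, ip_add_left, ip_sum_left] at h0
  rw [ip_mul_right (x * v2 hs) (vv hs) (v2 hs) x (v2_coord_eq hs)] at h0
  have hnnip : ∀ g ∈ Finset.univ.erase (1 : H),
      ip ((x * nn g) * nn g) x = ip (x * nn g) (x * nn g) :=
    fun g _ => ip_mul_right (x * nn g) (nn g) (nn g) x (nn_symm g)
  rw [Finset.sum_congr rfl hnnip] at h0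
  have h1 : 0 ≤ ∑ g ∈ Finset.univ.erase (1 : H), ip (x * nn g) (x * nn g) :=
    Finset.sum_nonneg fun g _ => ip_self_nonneg _
  have h2 := ip_self_nonneg (x * v2 hs)
  have hv2zero : x * v2 hs = 0 := eq_zero_of_ip_self (by linarith)
  have hnnzero : ∀ g ∈ Finset.univ.erase (1 : H), x * nn g = 0 := by
    intro g hg
    refine eq_zero_of_ip_self ?_
    have h3 : ∑ g ∈ Finset.univ.erase (1 : H), ip (x * nn g) (x * nn g) = 0 := by linarith
    exact (Finset.sum_eq_zero_iff_of_nonneg fun g _ => ip_self_nonneg _).1 h3 g hg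
  -- from x * v2 = 0 deduce  ∑_j ip (x * single (hs j)⁻¹ 1) x = mm * ip x x
  have hu2 : x * u2 hs = (mm : ℤ) • x := by
    have : x * v2 hs = x * u2 hs - (mm : ℤ) • x := by
      rw [v2, mul_sub, mul_single_one]
    rw [this] at hv2zero
    exact sub_eq_zero.1 hv2zero
  have hsum : ∑ j, ip (x * MonoidAlgebra.single (hs j)⁻¹ 1) x = ∑ (_ : Fin mm), ip x x := by
    have : x * u2 hs = ∑ j, x * MonoidAlgebra.single (hs j)⁻¹ 1 := by
      rw [u2, Finset.mul_sum]
    rw [← ip_sum_left, ← this, hu2, ip_smul_left, Finset.sum_const, Finset.card_univ,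
      Fintype.card_fin, nsmul_eq_mul]
  have heach : ∀ j ∈ Finset.univ, ip (x * MonoidAlgebra.single (hs j)⁻¹ 1) x = ip x x :=
    (Finset.sum_eq_sum_iff_of_le fun j _ => ip_mul_single_le x ((hs j)⁻¹)).1 hsum
  set k := hs ⟨0, hm0⟩ with hk
  have heq : x * MonoidAlgebra.single k⁻¹ 1 = x :=
    eq_of_ip_mul_single x k⁻¹ (heach ⟨0, hm0⟩ (Finset.mem_univ _))
  have hk1 : x * MonoidAlgebra.single k 1 = x := by
    conv_lhs => rw [← heq, mul_assoc, MonoidAlgebra.single_mul_single, inv_mul_cancel, one_mul,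
      ← MonoidAlgebra.one_def, mul_one]
  have hpow : ∀ n : ℕ, x * MonoidAlgebra.single (k ^ n) 1 = x := by
    intro n
    induction n with
    | zero => rw [pow_zero, ← MonoidAlgebra.one_def, mul_one]
    | succ n ih =>
        have hss : (MonoidAlgebra.single (k ^ n) (1 : ℤ)) * MonoidAlgebra.single k 1 =
            MonoidAlgebra.single (k ^ (n + 1)) 1 := by
          rw [MonoidAlgebra.single_mul_single, one_mul, pow_succ]
        rw [← hss, ← mul_assoc, ih, hk1]
  have hz : ∀ z : Subgroup.zpowers k, x * MonoidAlgebra.single (z : H) 1 = x := by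
    intro z
    obtain ⟨n, hn⟩ := (Submonoid.mem_powers_iff _ _).1
      ((isOfFinOrder_of_finite k).mem_powers_iff_mem_zpowers.2 z.2)
    rw [← hn]
    exact hpow n
  have hnnk : x * nn k = (Fintype.card (Subgroup.zpowers k)) • x := by
    rw [nn, Finset.mul_sum]
    rw [Finset.sum_congr rfl fun z _ => hz z, Finset.sum_const, Finset.card_univ]
  have hkS : k ∈ Finset.univ.erase (1 : H) :=
    Finset.mem_erase.2 ⟨hne _, Finset.mem_univ _⟩
  have h0' : (Fintype.card (Subgroup.zpowers k)) • x = 0 := by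
    rw [← hnnk]; exact hnnzero k hkS
  have hcard : (Fintype.card (Subgroup.zpowers k) : ℤ) ≠ 0 := by
    exact_mod_cast Fintype.card_ne_zero
  ext g
  have h6 : (Fintype.card (Subgroup.zpowers k) • x) g = 0 := by rw [h0']; rfl
  rw [MonoidAlgebra.coeff_smul_apply, nsmul_eq_mul] at h6
  exact (mul_eq_zero.1 h6).resolve_left hcard

theorem uu_abs (t : H) : |uu hs t| ≤ (mm : ℤ) := by
  rw [uu_coord]
  have h1 : 0 ≤ ∑ j, if hs j = t then (1 : ℤ) else 0 :=
    Finset.sum_nonneg fun j _ => by positivity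
  have h2 : ∑ j, (if hs j = t then (1 : ℤ) else 0) ≤ ∑ (_ : Fin mm), (1 : ℤ) :=
    Finset.sum_le_sum fun j _ => by split <;> norm_num
  rw [Finset.sum_const, Finset.card_univ, Fintype.card_fin, nsmul_eq_mul, mul_one] at h2
  rw [abs_of_nonneg h1]
  exact h2

theorem single_one_abs (t : H) (n : ℕ) : |MonoidAlgebra.single (1 : H) (n : ℤ) t| ≤ (n : ℤ) := by
  rw [MonoidAlgebra.single_apply]
  split <;> simp

theorem vv_abs (t : H) : |vv hs t| ≤ 2 * (mm : ℤ) := by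
  rw [vv, MonoidAlgebra.coeff_sub, Finsupp.sub_apply]
  calc |uu hs t - MonoidAlgebra.single 1 (mm : ℤ) t|
      ≤ |uu hs t| + |MonoidAlgebra.single (1 : H) (mm : ℤ) t| := abs_sub _ _
    _ ≤ (mm : ℤ) + (mm : ℤ) := add_le_add (uu_abs hs t) (single_one_abs t mm)
    _ = 2 * (mm : ℤ) := by ring

theorem sum_single_abs (k : H) (n : ℕ) :
    ∑ t : H, |MonoidAlgebra.single k (n : ℤ) t| = (n : ℤ) := by
  have : ∀ t : H, |MonoidAlgebra.single k (n : ℤ) t| = if k = t then (n : ℤ) else 0 := by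
    intro t
    rw [MonoidAlgebra.single_apply]
    split <;> simp
  rw [Finset.sum_congr rfl fun t _ => this t, Finset.sum_ite_eq, if_pos (Finset.mem_univ _)]

theorem v2_l1 : ∑ t : H, |v2 hs t| ≤ 2 * (mm : ℤ) := by
  have hb : ∀ t : H, |v2 hs t| ≤ |u2 hs t| + |MonoidAlgebra.single (1 : H) (mm : ℤ) t| := by
    intro t
    rw [v2, MonoidAlgebra.coeff_sub, Finsupp.sub_apply]
    exact abs_sub _ _
  calc ∑ t : H, |v2 hs t|
      ≤ ∑ t : H, (|u2 hs t| + |MonoidAlgebra.single (1 : H) (mm : ℤ) t|) :=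
        Finset.sum_le_sum fun t _ => hb t
    _ = ∑ t : H, |u2 hs t| + ∑ t : H, |MonoidAlgebra.single (1 : H) (mm : ℤ) t| :=
        Finset.sum_add_distrib
    _ ≤ (mm : ℤ) + (mm : ℤ) := by
        refine add_le_add ?_ (le_of_eq (sum_single_abs 1 mm))
        have hnn : ∀ t : H, (0:ℤ) ≤ u2 hs t := by
          intro t
          rw [u2_coord]
          exact Finset.sum_nonneg fun j _ => by positivity
        have : ∑ t : H, |u2 hs t| = ∑ t : H, u2 hs t :=
          Finset.sum_congr rfl fun t _ => abs_of_nonneg (hnn t)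
        rw [this]
        have : ∑ t : H, u2 hs t = ∑ j : Fin mm, ∑ t : H, if (hs j)⁻¹ = t then (1:ℤ) else 0 := by
          rw [Finset.sum_comm]
          exact Finset.sum_congr rfl fun t _ => u2_coord hs t
        rw [this]
        have : ∀ j : Fin mm, ∑ t : H, (if (hs j)⁻¹ = t then (1:ℤ) else 0) = 1 := by
          intro j
          rw [Finset.sum_ite_eq, if_pos (Finset.mem_univ _)]
        rw [Finset.sum_congr rfl fun j _ => this j, Finset.sum_const, Finset.card_univ,
          Fintype.card_fin, nsmul_eq_mul, mul_one]
    _ = 2 * (mm : ℤ) := by ring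

theorem nn_abs (g t : H) : |nn g t| ≤ 1 := by
  rw [nn_coord]; split <;> simp

theorem nn_l1 (g : H) : ∑ t : H, |nn g t| ≤ (Fintype.card H : ℤ) := by
  calc ∑ t : H, |nn g t| ≤ ∑ (_ : H), (1 : ℤ) := Finset.sum_le_sum fun t _ => nn_abs g t
    _ = (Fintype.card H : ℤ) := by
        rw [Finset.sum_const, Finset.card_univ, nsmul_eq_mul, mul_one]

theorem mul_coord_abs_le (x y : MonoidAlgebra ℤ H) (X Y : ℤ) (hY : 0 ≤ Y)
    (hx : ∑ s : H, |x s| ≤ X) (hy : ∀ t, |y t| ≤ Y) (t : H) : |(x * y) t| ≤ X * Y := by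
  rw [mulApply]
  calc |∑ s : H, x s * y (s⁻¹ * t)|
      ≤ ∑ s : H, |x s * y (s⁻¹ * t)| := Finset.abs_sum_le_sum_abs _ _
    _ = ∑ s : H, |x s| * |y (s⁻¹ * t)| := Finset.sum_congr rfl fun s _ => abs_mul _ _
    _ ≤ ∑ s : H, |x s| * Y :=
        Finset.sum_le_sum fun s _ => mul_le_mul_of_nonneg_left (hy _) (abs_nonneg _)
    _ = (∑ s : H, |x s|) * Y := by rw [Finset.sum_mul]
    _ ≤ X * Y := mul_le_mul_of_nonneg_right hx hY

theorem ww_abs (t : H) :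
    |ww hs t| ≤ 2 * (mm : ℤ) * (2 * mm) + (Fintype.card H : ℤ) * (Fintype.card H) := by
  rw [ww, MonoidAlgebra.coeff_add, Finsupp.add_apply]
  refine le_trans (abs_add_le _ _) (add_le_add ?_ ?_)
  · exact mul_coord_abs_le _ _ _ _ (by positivity) (v2_l1 hs) (vv_abs hs) t
  · rw [MonoidAlgebra.coeff_sum, Finset.sum_apply']
    calc |∑ g ∈ Finset.univ.erase (1:H), (nn g * nn g) t|
        ≤ ∑ g ∈ Finset.univ.erase (1:H), |(nn g * nn g) t| := Finset.abs_sum_le_sum_abs _ _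
      _ ≤ ∑ _g ∈ Finset.univ.erase (1:H), (Fintype.card H : ℤ) :=
          Finset.sum_le_sum fun g _ => by
            have := mul_coord_abs_le (nn g) (nn g) (Fintype.card H : ℤ) 1 zero_le_one
              (nn_l1 g) (nn_abs g) t
            simpa using this
      _ ≤ (Fintype.card H : ℤ) * (Fintype.card H) := by
          rw [Finset.sum_const, nsmul_eq_mul]
          have hcle : ((Finset.univ.erase (1:H)).card : ℤ) ≤ (Fintype.card H : ℤ) := by
            exact_mod_cast le_trans (Finset.card_le_card (Finset.erase_subset _ _))
              (le_of_eq Finset.card_univ)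
          exact mul_le_mul_of_nonneg_right hcle (by positivity)

end Setting

/-- the matrix of right multiplication by `w` on the group algebra -/
noncomputable def Mw (w : MonoidAlgebra ℤ H) : Matrix H H ℤ :=
  Matrix.of fun g h => w (h⁻¹ * g)

theorem mulVec_eq (w x : MonoidAlgebra ℤ H) (g : H) :
    (x * w) g = ((Mw w).mulVec (fun s => x s)) g := by
  rw [mulApply, Matrix.mulVec, dotProduct]
  exact Finset.sum_congr rfl fun s _ => by rw [Mw]; exact mul_comm _ _

theorem Mw_det_ne_zero (w : MonoidAlgebra ℤ H) (hinj : ∀ x : MonoidAlgebra ℤ H, x * w = 0 → x = 0) :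
    (Mw w).det ≠ 0 := by
  intro h
  obtain ⟨v, hv0, hv⟩ := Matrix.exists_mulVec_eq_zero_iff.mpr h
  set x : MonoidAlgebra ℤ H := MonoidAlgebra.ofCoeff (Finsupp.equivFunOnFinite.symm v) with hxdef
  have hxv : (fun s => x s) = v := rfl
  have hx : x * w = 0 := by
    ext g
    rw [mulVec_eq, hxv, hv]
    rfl
  apply hv0
  rw [← hxv, hinj x hx]
  rfl

theorem exists_mul_eq_det (w : MonoidAlgebra ℤ H) :
    ∃ a : MonoidAlgebra ℤ H, a * w = (Mw w).det • 1 := by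
  classical
  set δ : H → ℤ := fun g => if g = 1 then 1 else 0 with hδ
  refine ⟨(MonoidAlgebra.ofCoeff (Finsupp.equivFunOnFinite.symm ((Mw w).adjugate.mulVec δ)) : MonoidAlgebra ℤ H), ?_⟩
  ext g
  rw [mulVec_eq]
  have hcoe : (fun s => (MonoidAlgebra.ofCoeff (Finsupp.equivFunOnFinite.symm ((Mw w).adjugate.mulVec δ))
      : MonoidAlgebra ℤ H) s) = (Mw w).adjugate.mulVec δ := rfl
  rw [hcoe, Matrix.mulVec_mulVec, Matrix.mul_adjugate, Matrix.smul_mulVec,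
    Matrix.one_mulVec]
  have hrhs : ((Mw w).det • (1 : MonoidAlgebra ℤ H)) g
      = (Mw w).det * (if g = 1 then 1 else 0) := by
    rw [MonoidAlgebra.coeff_smul_apply, MonoidAlgebra.one_def, MonoidAlgebra.single_apply, smul_eq_mul]
    congr 1
    simp [eq_comm]
  rw [hrhs]
  rfl

theorem det_abs_le (M : Matrix H H ℤ) (B : ℤ) (hB : 0 ≤ B) (h : ∀ g h' : H, |M g h'| ≤ B) :
    |M.det| ≤ ((Fintype.card H).factorial : ℤ) * B ^ (Fintype.card H) := by
  rw [Matrix.det_apply]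
  calc |∑ σ : Equiv.Perm H, Equiv.Perm.sign σ • ∏ i : H, M (σ i) i|
      ≤ ∑ σ : Equiv.Perm H, |Equiv.Perm.sign σ • ∏ i : H, M (σ i) i| :=
        Finset.abs_sum_le_sum_abs _ _
    _ ≤ ∑ _σ : Equiv.Perm H, B ^ (Fintype.card H) := by
        refine Finset.sum_le_sum fun σ _ => ?_
        have h1 : |Equiv.Perm.sign σ • ∏ i : H, M (σ i) i| = |∏ i : H, M (σ i) i| := by
          rw [Units.smul_def, smul_eq_mul, abs_mul]
          rcases Int.units_eq_one_or (Equiv.Perm.sign σ) with hs | hs <;> rw [hs] <;> simp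
        rw [h1, Finset.abs_prod]
        calc ∏ i : H, |M (σ i) i| ≤ ∏ _i : H, B := Finset.prod_le_prod
              (fun i _ => abs_nonneg _) (fun i _ => h _ _)
          _ = B ^ (Fintype.card H) := by rw [Finset.prod_const, Finset.card_univ]
    _ = ((Fintype.card H).factorial : ℤ) * B ^ (Fintype.card H) := by
        rw [Finset.sum_const, Finset.card_univ, Fintype.card_perm, nsmul_eq_mul]

theorem End_sub_apply {A : Type*} [AddCommGroup A] (f g : AddMonoid.End A) (b : A) :
    (f - g) b = f b - g b := rfl

theorem End_add_apply {A : Type*} [AddCommGroup A] (f g : AddMonoid.End A) (b : A) :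
    (f + g) b = f b + g b := rfl

theorem End_finset_sum_apply {A ι : Type*} [AddCommGroup A] (s : Finset ι)
    (f : ι → AddMonoid.End A) (b : A) : (∑ i ∈ s, f i) b = ∑ i ∈ s, f i b := by
  classical
  induction s using Finset.induction_on with
  | empty => rfl
  | insert a s ha ih => rw [Finset.sum_insert ha, Finset.sum_insert ha, End_add_apply, ih]

end CorAux

/-- **Corollary 3.2.** For all positive integers `c`, `q` there is a constant `p₀`
depending only on `c` and `q` such that: if `p > p₀` is a prime, `A` an elementary abelian
group of order `p²`, `H` a group of order `q` acting on `A` with `C_A(h) = 0` for all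
nontrivial `h ∈ H`, and `b` a nonzero element of `A`, then the constant sequence
`(b, …, b)` of length `c` is `H`-independent. -/
theorem constant_sequence_independent_elementary_abelian
    (c q : ℕ) (hc : 0 < c) (hq : 0 < q) :
    ∃ p₀ : ℕ,
      ∀ p : ℕ, p.Prime → p₀ < p →
        ∀ (A : Type*) [AddCommGroup A],
          Nat.card A = p ^ 2 →
          (∀ a : A, p • a = 0) →
          ∀ (H : Type*) [Group H] [Finite H],
            Nat.card H = q →
            ∀ σ : H →* Multiplicative (AddAut A),
              (∀ h : H, h ≠ 1 → ∀ a : A, (σ h).toAdd a = a → a = 0) →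
              ∀ b : A, b ≠ 0 → ¬ IsHDependent σ (fun _ : Fin c => b) := by
  classical
  refine ⟨q.factorial * (4 * c ^ 2 + q ^ 2) ^ q, ?_⟩
  intro p hp hp0 A _ hcardA hpA H _ _ hcardH σ hfree b hb hdep
  obtain ⟨mm, idx, hs, hm0, hinj, hne1, hrel⟩ := hdep
  letI : Fintype H := Fintype.ofFinite H
  letI : DecidableEq H := Classical.decEq H
  have hqH : Fintype.card H = q := by rw [← Nat.card_eq_fintype_card, hcardH]
  have hmc : mm ≤ c := by
    have := Fintype.card_le_of_injective idx hinj
    simpa using this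
  have hrel' : ∑ j, (σ (hs j)).toAdd b = mm • b := by
    rw [← hrel]
    simp
  -- the group-algebra machinery
  set w : MonoidAlgebra ℤ H := CorAux.ww hs with hwdef
  have hinjw : ∀ x : MonoidAlgebra ℤ H, x * w = 0 → x = 0 :=
    fun x hx => CorAux.ww_inj hs hm0 hne1 x hx
  have hdet : (CorAux.Mw w).det ≠ 0 := CorAux.Mw_det_ne_zero w hinjw
  obtain ⟨a, ha⟩ := CorAux.exists_mul_eq_det w
  -- the action of the group algebra on A
  set μ : H →* AddMonoid.End A :=
    { toFun := fun h => AddMonoidHom.mk' (fun x => (σ h).toAdd x) (fun x y => map_add (σ h).toAdd x y),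
      map_one' := by
        refine AddMonoidHom.ext fun x => ?_
        show (σ 1).toAdd x = x
        rw [map_one]
        rfl,
      map_mul' := by
        intro g h
        refine AddMonoidHom.ext fun x => ?_
        show (σ (g * h)).toAdd x = (σ g).toAdd ((σ h).toAdd x)
        rw [map_mul]
        rfl } with hμ
  set Φ : MonoidAlgebra ℤ H →ₐ[ℤ] AddMonoid.End A :=
    MonoidAlgebra.lift ℤ (AddMonoid.End A) H μ with hΦdef
  have hsingle : ∀ (h : H) (z : ℤ) (x : A), Φ (MonoidAlgebra.single h z) x = z • (σ h).toAdd x := by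
    intro h z x
    rw [hΦdef, MonoidAlgebra.lift_single]
    rfl
  have hΦvv : Φ (CorAux.vv hs) b = 0 := by
    rw [CorAux.vv, map_sub, CorAux.End_sub_apply]
    have h1 : Φ (CorAux.uu hs) b = mm • b := by
      rw [CorAux.uu, map_sum, CorAux.End_finset_sum_apply]
      rw [Finset.sum_congr rfl fun j _ => hsingle (hs j) 1 b]
      simpa using hrel'
    have h2 : Φ (MonoidAlgebra.single (1 : H) (mm : ℤ)) b = mm • b := by
      rw [hsingle, map_one]
      simp [natCast_zsmul]
    rw [h1, h2, sub_self]
  have hΦnn : ∀ g : H, g ≠ 1 → Φ (CorAux.nn g) b = 0 := by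
    intro g hg
    have hval : Φ (CorAux.nn g) b = ∑ z : Subgroup.zpowers g, (σ (z : H)).toAdd b := by
      rw [CorAux.nn, map_sum, CorAux.End_finset_sum_apply]
      refine Finset.sum_congr rfl fun z _ => ?_
      rw [hsingle]
      simp
    refine hfree g hg _ ?_
    rw [hval, map_sum]
    refine Fintype.sum_equiv
      (Equiv.mulLeft (⟨g, Subgroup.mem_zpowers g⟩ : Subgroup.zpowers g)) _ _ fun z => ?_
    have : (σ g).toAdd ((σ (z : H)).toAdd b) = (σ (g * (z : H))).toAdd b := by
      rw [map_mul]
      rfl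
    rw [this]
    rfl
  have hterm : ∀ g ∈ Finset.univ.erase (1 : H), (Φ (CorAux.nn g * CorAux.nn g)) b = 0 := by
    intro g hg
    rw [map_mul]
    have h2 : (Φ (CorAux.nn g) * Φ (CorAux.nn g)) b = Φ (CorAux.nn g) (Φ (CorAux.nn g) b) :=
      rfl
    rw [h2, hΦnn g (Finset.mem_erase.1 hg).1, map_zero]
  have hΦw : Φ w b = 0 := by
    have hsplit : Φ w = Φ (CorAux.v2 hs) * Φ (CorAux.vv hs)
        + ∑ g ∈ Finset.univ.erase (1 : H), Φ (CorAux.nn g * CorAux.nn g) := by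
      rw [hwdef, CorAux.ww, map_add, map_mul, map_sum]
    rw [hsplit, CorAux.End_add_apply]
    have h1 : (Φ (CorAux.v2 hs) * Φ (CorAux.vv hs)) b = Φ (CorAux.v2 hs) (Φ (CorAux.vv hs) b) :=
      rfl
    rw [h1, hΦvv, map_zero, CorAux.End_finset_sum_apply, Finset.sum_eq_zero hterm, add_zero]
  have hdb : (CorAux.Mw w).det • b = 0 := by
    have h3 : Φ (a * w) b = 0 := by
      rw [map_mul]
      have : (Φ a * Φ w) b = Φ a (Φ w b) := rfl
      rw [this, hΦw, map_zero]
    rw [ha] at h3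
    rw [map_zsmul, map_one] at h3
    simpa using h3
  -- conclude by an order argument
  have hNpos : 0 < (CorAux.Mw w).det.natAbs := Int.natAbs_pos.2 hdet
  have hNb : (CorAux.Mw w).det.natAbs • b = 0 := by
    rcases Int.natAbs_eq (CorAux.Mw w).det with h | h
    · rw [← natCast_zsmul, ← h]
      exact hdb
    · rw [← natCast_zsmul]
      have : ((CorAux.Mw w).det.natAbs : ℤ) = -(CorAux.Mw w).det := by omega
      rw [this, neg_zsmul, hdb, neg_zero]
  have hordp : addOrderOf b = p := by
    have h1 : addOrderOf b ∣ p := addOrderOf_dvd_iff_nsmul_eq_zero.2 (hpA b)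
    rcases hp.eq_one_or_self_of_dvd _ h1 with h | h
    · exact absurd (AddMonoid.addOrderOf_eq_one_iff.1 h) hb
    · exact h
  have hpd : p ∣ (CorAux.Mw w).det.natAbs := by
    rw [← hordp]
    exact addOrderOf_dvd_iff_nsmul_eq_zero.2 hNb
  have hple : p ≤ (CorAux.Mw w).det.natAbs := Nat.le_of_dvd hNpos hpd
  -- the determinant bound
  have hBw : ∀ t : H, |w t| ≤ ((4 * c ^ 2 + q ^ 2 : ℕ) : ℤ) := by
    intro t
    refine le_trans (CorAux.ww_abs hs t) ?_
    rw [hqH]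
    have h1 : (mm : ℤ) ≤ (c : ℤ) := by exact_mod_cast hmc
    have h2 : (0 : ℤ) ≤ (mm : ℤ) := by positivity
    push_cast
    nlinarith
  have hent : ∀ g h' : H, |CorAux.Mw w g h'| ≤ ((4 * c ^ 2 + q ^ 2 : ℕ) : ℤ) := by
    intro g h'
    exact hBw (h'⁻¹ * g)
  have hdet_le := CorAux.det_abs_le (CorAux.Mw w) _ (by positivity) hent
  rw [hqH] at hdet_le
  have hfin : (CorAux.Mw w).det.natAbs ≤ q.factorial * (4 * c ^ 2 + q ^ 2) ^ q := by
    have : |(CorAux.Mw w).det| ≤ ((q.factorial * (4 * c ^ 2 + q ^ 2) ^ q : ℕ) : ℤ) := by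
      refine le_trans hdet_le (le_of_eq ?_)
      push_cast
      ring
    rw [Int.abs_eq_natAbs] at this
    exact_mod_cast this
  omega
end
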